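/- FindSeeds (Algorithm 1), which enumerates subsets of the body in increasing size, skips all supersets of failed candidates' complements via the constant-time IsAbsent check, and recurses on the remaining statements after finding a seed, terminates on every finite input and outputs only sets satisfying the sufficiency condition M(output) = ℓ. -/
import Mathlib


open scoped Classical

/-- One step of the seed search: pick a minimal-size nonempty candidate subset
of `B` whose prediction is `ℓ` and whose proper subsets all fail. -/
noncomputable def pickSeed {S L : Type*} [DecidableEq S]
    (M : Finset S → L) (ℓ : L) (B : Finset S) : Option (Finset S) :=
  (B.powerset.filter
    (fun A => A.Nonempty ∧ M A = ℓ ∧ ∀ A' : Finset S, A' ⊂ A → M A' ≠ ℓ)).toList.head?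

/-- `FindSeeds` (Algorithm 1), with fuel witnessing termination: find a seed of
the current set of statements; if the complement may still contain seeds
(`IsAbsent` fails, i.e. `M (B \ s) = ℓ`), recurse on the complement. -/
noncomputable def findSeedsAux {S L : Type*} [DecidableEq S]
    (M : Finset S → L) (ℓ : L) : ℕ → Finset S → Finset (Finset S)
  | 0, _ => ∅
  | fuel + 1, B =>
    match pickSeed M ℓ B with
    | none => ∅
    | some s =>
      if M (B \ s) = ℓ then insert s (findSeedsAux M ℓ fuel (B \ s)) else {s}

/-- `FindSeeds` terminates on every finite input (it is a total function, with
fuel `B.card` sufficing since the recursion argument strictly decreases). -/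
noncomputable def findSeeds {S L : Type*} [DecidableEq S]
    (M : Finset S → L) (ℓ : L) (B : Finset S) : Finset (Finset S) :=
  findSeedsAux M ℓ B.card B

/-- Soundness of `FindSeeds`: every output set satisfies the sufficiency
condition `M A = ℓ`. -/
theorem findSeeds_sound {S L : Type*} [DecidableEq S]
    (M : Finset S → L) (ℓ : L) (B : Finset S) :
    ∀ A ∈ findSeeds M ℓ B, M A = ℓ := by
  have key : ∀ (B : Finset S) (s : Finset S), pickSeed M ℓ B = some s → M s = ℓ := by
    intro B s hs
    have : s ∈ (B.powerset.filter
        (fun A => A.Nonempty ∧ M A = ℓ ∧ ∀ A' : Finset S, A' ⊂ A → M A' ≠ ℓ)).toList := by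
      exact List.mem_of_mem_head? hs
    rw [Finset.mem_toList, Finset.mem_filter] at this
    exact this.2.2.1
  have main : ∀ (n : ℕ) (B : Finset S), ∀ A ∈ findSeedsAux M ℓ n B, M A = ℓ := by
    intro n
    induction n with
    | zero => intro B A hA; simp [findSeedsAux] at hA
    | succ n ih =>
      intro B A hA
      rw [findSeedsAux] at hA
      rcases hps : pickSeed M ℓ B with _ | s <;> rw [hps] at hA <;> dsimp only at hA
      · simp at hA
      · by_cases hc : M (B \ s) = ℓ
        · rw [if_pos hc, Finset.mem_insert] at hA
          rcases hA with h | h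
          · subst h; exact key B A hps
          · exact ih _ _ h
        · rw [if_neg hc, Finset.mem_singleton] at hA; subst hA; exact key B A hps
  exact main _ B
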